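/- Let c = (c_1,…,c_n) be a vector of non-negative integers and d ≥ 1, ℓ ≥ 0 integers. Then the ideal (I_{c,n,d+ℓ})_{>ℓ}, generated by all c-bounded monomials of degree d + ℓ whose support has more than ℓ elements, is a polymatroidal ideal. (Equivalently, the ℓ-th homological shift ideal HS_ℓ(I_{c,n,d}) is polymatroidal.) -/

import Mathlib

private lemma app_eq' {n : ℕ} (a : Fin n →₀ ℕ) (i j k : Fin n) (hij : i ≠ j) :
    (a - Finsupp.single i 1 + Finsupp.single j 1 : Fin n →₀ ℕ) k
      = if k = i then a i - 1 else if k = j then a j + 1 else a k := by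
  simp only [Finsupp.add_apply, Finsupp.tsub_apply, Finsupp.single_apply]
  rcases eq_or_ne k i with rfl | hki
  · simp [hij, Ne.symm hij]
  · rcases eq_or_ne k j with rfl | hkj
    · simp [Ne.symm hki, hij, hki]
    · simp [Ne.symm hki, Ne.symm hkj, hki, hkj]

/-- the ideal `(I_{c,n,d+ℓ})_{>ℓ}`, whose minimal monomial generators are exactly the
`c`-bounded monomials of degree `d + ℓ` whose support has more than `ℓ` elements, is polymatroidal:
its set of (exponent vectors of) minimal generators satisfies the exchange property. -/
theorem stmt_6 {n : ℕ} (c : Fin n → ℕ) (d ℓ : ℕ) (hd : 1 ≤ d) :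
    ∀ a b : Fin n →₀ ℕ,
      ((∑ i, a i) = d + ℓ ∧ (∀ i, a i ≤ c i) ∧ ℓ < a.support.card) →
      ((∑ i, b i) = d + ℓ ∧ (∀ i, b i ≤ c i) ∧ ℓ < b.support.card) →
      ∀ i : Fin n, b i < a i → ∃ j : Fin n, a j < b j ∧
        ((∑ k, (a - Finsupp.single i 1 + Finsupp.single j 1 : Fin n →₀ ℕ) k) = d + ℓ ∧
         (∀ k, (a - Finsupp.single i 1 + Finsupp.single j 1 : Fin n →₀ ℕ) k ≤ c k) ∧
         ℓ < (a - Finsupp.single i 1 + Finsupp.single j 1 : Fin n →₀ ℕ).support.card) := by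
  rintro a b ⟨hsa, hca, hla⟩ ⟨hsb, hcb, hlb⟩ i hi
  have hai : 1 ≤ a i := by omega
  -- sum and bound conditions hold for any valid exchange index j
  have hsum : ∀ j : Fin n, i ≠ j →
      (∑ k, (a - Finsupp.single i 1 + Finsupp.single j 1 : Fin n →₀ ℕ) k) = d + ℓ := by
    intro j hij
    have split : ∀ g : Fin n → ℕ,
        ∑ k, g k = g j + (g i + ∑ k ∈ (Finset.univ.erase j).erase i, g k) := by
      intro g
      rw [← Finset.add_sum_erase _ g (Finset.mem_univ j),
        ← Finset.add_sum_erase _ g (Finset.mem_erase.2 ⟨hij, Finset.mem_univ i⟩)]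
    rw [split, app_eq' a i j j hij, app_eq' a i j i hij]
    rw [split a] at hsa
    simp only [Ne.symm hij, if_neg, if_pos, ite_true, ite_false] at *
    have : ∑ k ∈ (Finset.univ.erase j).erase i,
        (a - Finsupp.single i 1 + Finsupp.single j 1 : Fin n →₀ ℕ) k
        = ∑ k ∈ (Finset.univ.erase j).erase i, a k := by
      refine Finset.sum_congr rfl (fun k hk => ?_)
      simp only [Finset.mem_erase] at hk
      rw [app_eq' a i j k hij, if_neg hk.1, if_neg hk.2.1]
    rw [this]
    omega
  have hbnd : ∀ j : Fin n, i ≠ j → a j < b j →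
      ∀ k, (a - Finsupp.single i 1 + Finsupp.single j 1 : Fin n →₀ ℕ) k ≤ c k := by
    intro j hij hjb k
    rw [app_eq' a i j k hij]
    split_ifs with h1 h2
    · subst h1; have := hca k; omega
    · subst h2; have := hcb k; omega
    · exact hca k
  by_cases hA : ∃ j, a j = 0 ∧ 0 < b j
  · obtain ⟨j, haj, hbj⟩ := hA
    have hjb : a j < b j := by omega
    have hij : i ≠ j := by rintro rfl; omega
    refine ⟨j, hjb, hsum j hij, hbnd j hij hjb, ?_⟩
    have hcard : a.support.card ≤
        (a - Finsupp.single i 1 + Finsupp.single j 1 : Fin n →₀ ℕ).support.card := by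
      apply Finset.card_le_card_of_injOn (fun k => if k = i then j else k)
      · intro k hk
        simp only [Finset.mem_coe, Finsupp.mem_support_iff] at hk ⊢
        by_cases h : k = i
        · simp only [h, if_pos]
          rw [app_eq' a i j j hij, if_neg (Ne.symm hij), if_pos rfl]
          omega
        · simp only [h, if_neg, ite_false]
          rw [app_eq' a i j k hij, if_neg h]
          split_ifs with h2
          · omega
          · exact hk
      · intro k1 h1 k2 h2 he
        simp only [Finset.mem_coe, Finsupp.mem_support_iff] at h1 h2
        dsimp only at he
        by_cases e1 : k1 = i
        · by_cases e2 : k2 = i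
          · rw [e1, e2]
          · rw [if_pos e1, if_neg e2] at he
            exact absurd (he ▸ haj : a k2 = 0) h2
        · by_cases e2 : k2 = i
          · rw [if_neg e1, if_pos e2] at he
            exact absurd (he.symm ▸ haj : a k1 = 0) h1
          · rwa [if_neg e1, if_neg e2] at he
    omega
  · push_neg at hA
    have hB : ∀ k, b k ≠ 0 → a k ≠ 0 := by
      intro k hk hak
      exact hk (Nat.le_zero.1 (hA k hak))
    obtain ⟨j, hj⟩ : ∃ j, a j < b j := by
      by_contra h
      push_neg at h
      have : ∑ k, b k < ∑ k, a k :=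
        Finset.sum_lt_sum (fun k _ => h k) ⟨i, Finset.mem_univ i, hi⟩
      omega
    have hij : i ≠ j := by rintro rfl; omega
    have haj : a j ≠ 0 := hB j (by omega)
    refine ⟨j, hj, hsum j hij, hbnd j hij hj, ?_⟩
    by_cases h2 : 2 ≤ a i
    · have hsub : a.support ⊆
          (a - Finsupp.single i 1 + Finsupp.single j 1 : Fin n →₀ ℕ).support := by
        intro k hk
        simp only [Finsupp.mem_support_iff] at hk ⊢
        rw [app_eq' a i j k hij]
        split_ifs with e1 e2
        · omega
        · omega
        · exact hk
      have := Finset.card_le_card hsub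
      omega
    · have hbi : b i = 0 := by omega
      have hsub : b.support ⊆
          (a - Finsupp.single i 1 + Finsupp.single j 1 : Fin n →₀ ℕ).support := by
        intro k hk
        simp only [Finsupp.mem_support_iff] at hk ⊢
        have hak : a k ≠ 0 := hB k hk
        rw [app_eq' a i j k hij]
        split_ifs with e1 e2
        · exact absurd (e1 ▸ hk : b i ≠ 0) (by simp [hbi])
        · omega
        · exact hak
      have := Finset.card_le_card hsub
      omega
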